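/- (Bernstein) Let α ∈ (0,1) and let f : ℝ → ℝ be 2π-periodic and satisfy |f(x) − f(y)| ≤ M·|x − y|^α for all x, y and some M ≥ 0. Then there is a constant C depending only on α such that for all n ∈ ℕ, sup_{x∈ℝ} |f(x) − σ_n(f;x)| ≤ C·M·n^{−α}, where σ_n(f) = (1/(n+1)) Σ_{k=0}^n S_k(f) is the n-th Fejér mean and S_k(f) is the k-th partial sum of the Fourier series of f. -/

import Mathlib

open Real

/-- The `j`-th Fourier coefficient `f̂_j = (1/2π)∫_{−π}^{π} f(t) e^{−ijt} dt`. -/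
noncomputable def fourierCoef (f : ℝ → ℝ) (j : ℤ) : ℂ :=
  (1 / (2 * Real.pi)) * ∫ t in (-Real.pi)..Real.pi,
    (f t : ℂ) * Complex.exp (-(Complex.I * (j : ℂ) * (t : ℂ)))

/-- The `k`-th partial Fourier sum `S_k(f;x) = Σ_{|j|≤k} f̂_j e^{ijx}`. -/
noncomputable def fourierPartialSum (k : ℕ) (f : ℝ → ℝ) (x : ℝ) : ℂ :=
  ∑ j ∈ Finset.Icc (-(k : ℤ)) (k : ℤ),
    fourierCoef f j * Complex.exp (Complex.I * (j : ℂ) * (x : ℂ))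

/-- The `n`-th Fejér mean `σ_n(f) = (1/(n+1)) Σ_{k=0}^n S_k(f)`. -/
noncomputable def fejerMean (n : ℕ) (f : ℝ → ℝ) (x : ℝ) : ℂ :=
  (1 / (n + 1 : ℂ)) * ∑ k ∈ Finset.range (n + 1), fourierPartialSum k f x

namespace BernsteinAux

open Complex Finset

noncomputable def ee (j : ℤ) (t : ℝ) : ℂ := Complex.exp (Complex.I * j * t)

lemma ee_mul (j j' : ℤ) (t : ℝ) : ee j t * ee j' t = ee (j + j') t := by
  rw [ee, ee, ee, ← Complex.exp_add]; push_cast; ring_nf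

lemma ee_zero (t : ℝ) : ee 0 t = 1 := by simp [ee]

lemma conj_ee (j : ℤ) (t : ℝ) : (starRingEnd ℂ) (ee j t) = ee (-j) t := by
  rw [ee, ee, ← Complex.exp_conj]
  congr 1
  simp

lemma abs_ee (j : ℤ) (t : ℝ) : ‖ee j t‖ = 1 := by
  rw [ee, Complex.norm_exp]
  simp [Complex.mul_re]

lemma ee_neg_arg (j : ℤ) (t : ℝ) : ee j (-t) = ee (-j) t := by
  rw [ee, ee]; push_cast; ring_nf

lemma ee_periodic (j : ℤ) : Function.Periodic (ee j) (2 * π) := by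
  intro t
  rw [ee, ee]
  push_cast
  rw [mul_add, Complex.exp_add,
    show Complex.I * (j : ℂ) * (2 * (π : ℂ)) = (j : ℂ) * (2 * (π : ℂ) * Complex.I) by ring,
    Complex.exp_int_mul_two_pi_mul_I, mul_one]

lemma continuous_ee (j : ℤ) : Continuous (ee j) :=
  Complex.continuous_exp.comp (continuous_const.mul Complex.continuous_ofReal)

noncomputable def DK (k : ℕ) (t : ℝ) : ℂ := ∑ j ∈ Finset.Icc (-(k : ℤ)) (k : ℤ), ee j t

noncomputable def GG (n : ℕ) (t : ℝ) : ℂ := ∑ k ∈ Finset.range (n + 1), ee k t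

lemma sum_Icc_eq_range (k : ℕ) (h : ℤ → ℂ) :
    ∑ j ∈ Finset.Icc (-(k : ℤ)) (k : ℤ), h j
      = ∑ i ∈ Finset.range (2 * k + 1), h ((i : ℤ) - k) := by
  refine Finset.sum_nbij' (fun j => (j + k).toNat) (fun i => (i : ℤ) - k) ?_ ?_ ?_ ?_ ?_
  · intro a ha; simp only [Finset.mem_Icc] at ha; simp only [Finset.mem_range]; omega
  · intro a ha; simp only [Finset.mem_range] at ha; simp only [Finset.mem_Icc]; omega
  · intro a ha; simp only [Finset.mem_Icc] at ha; omega
  · intro a ha; simp only [Finset.mem_range] at ha; omega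
  · intro a ha; simp only [Finset.mem_Icc] at ha; congr 1; omega

lemma DK_succ (n : ℕ) (t : ℝ) :
    DK (n + 1) t = (∑ i ∈ Finset.range (n + 1), ee ((i : ℤ) - (n + 1)) t)
      + (∑ i ∈ Finset.range (n + 1), ee ((n : ℤ) + 1 - i) t) + 1 := by
  rw [DK, sum_Icc_eq_range]
  have h23 : 2 * (n + 1) + 1 = (n + 2) + (n + 1) := by omega
  rw [h23, Finset.sum_range_add, Finset.sum_range_succ]
  have h0 : ee (((n + 1 : ℕ) : ℤ) - ((n + 1 : ℕ) : ℤ)) t = 1 := by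
    simp [ee_zero]
  have h1 : ∀ i ∈ Finset.range (n + 1),
      ee (((n + 2 + i : ℕ) : ℤ) - ((n + 1 : ℕ) : ℤ)) t = ee ((i : ℤ) + 1) t := by
    intro i _; congr 1; omega
  have h2 : ∑ i ∈ Finset.range (n + 1), ee (((n + 2 + i : ℕ) : ℤ) - ((n + 1 : ℕ) : ℤ)) t
      = ∑ i ∈ Finset.range (n + 1), ee ((n : ℤ) + 1 - i) t := by
    rw [Finset.sum_congr rfl h1, ← Finset.sum_range_reflect]
    refine Finset.sum_congr rfl ?_
    intro j hj
    simp only [Finset.mem_range] at hj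
    congr 1
    omega
  have h3 : ∀ i ∈ Finset.range (n + 1),
      ee (((i : ℕ) : ℤ) - ((n + 1 : ℕ) : ℤ)) t = ee ((i : ℤ) - ((n : ℤ) + 1)) t := by
    intro i _
    norm_num
  rw [Finset.sum_congr rfl h3, h0, h2]
  ring


lemma sum_DK (n : ℕ) (t : ℝ) :
    ∑ k ∈ Finset.range (n + 1), DK k t = GG n t * (starRingEnd ℂ) (GG n t) := by
  induction n with
  | zero =>
      simp [DK, GG, ee_zero]
  | succ n ih =>
      rw [Finset.sum_range_succ, ih, DK_succ]
      have hG : GG (n + 1) t = GG n t + ee ((n : ℤ) + 1) t := by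
        rw [GG, GG, Finset.sum_range_succ]
        push_cast
        ring_nf
      have hA : GG n t * ee (-((n : ℤ) + 1)) t
          = ∑ i ∈ Finset.range (n + 1), ee ((i : ℤ) - ((n : ℤ) + 1)) t := by
        rw [GG, Finset.sum_mul]
        refine Finset.sum_congr rfl fun i _ => ?_
        rw [ee_mul]
        congr 1
      have hB : ee ((n : ℤ) + 1) t * (starRingEnd ℂ) (GG n t)
          = ∑ i ∈ Finset.range (n + 1), ee ((n : ℤ) + 1 - i) t := by
        rw [GG, map_sum, Finset.mul_sum]
        refine Finset.sum_congr rfl fun i _ => ?_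
        rw [conj_ee, ee_mul]
        congr 1
      have hC : ee ((n : ℤ) + 1) t * ee (-((n : ℤ) + 1)) t = 1 := by
        rw [ee_mul, show (n : ℤ) + 1 + -((n : ℤ) + 1) = 0 by ring, ee_zero]
      rw [hG, map_add, conj_ee, ← hA, ← hB, ← hC]
      ring

noncomputable def KK (n : ℕ) (t : ℝ) : ℝ := ((n : ℝ) + 1)⁻¹ * Complex.normSq (GG n t)

lemma sum_DK_eq (n : ℕ) (t : ℝ) :
    ∑ k ∈ Finset.range (n + 1), DK k t = ((Complex.normSq (GG n t) : ℝ) : ℂ) := by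
  rw [sum_DK, Complex.mul_conj]

lemma KK_nonneg (n : ℕ) (t : ℝ) : 0 ≤ KK n t :=
  mul_nonneg (by positivity) (Complex.normSq_nonneg _)

lemma abs_GG_le (n : ℕ) (t : ℝ) : ‖GG n t‖ ≤ (n : ℝ) + 1 := by
  calc ‖GG n t‖ ≤ ∑ k ∈ Finset.range (n + 1), ‖ee k t‖ :=
        norm_sum_le _ _
    _ = (n : ℝ) + 1 := by simp [abs_ee]

lemma KK_le_const (n : ℕ) (t : ℝ) : KK n t ≤ (n : ℝ) + 1 := by
  have h1 : Complex.normSq (GG n t) ≤ ((n : ℝ) + 1) ^ 2 := by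
    rw [Complex.normSq_eq_norm_sq]
    have := abs_GG_le n t
    nlinarith [norm_nonneg (GG n t)]
  have h2 : (0 : ℝ) < (n : ℝ) + 1 := by positivity
  rw [KK]
  rw [inv_mul_le_iff₀ h2]
  nlinarith

lemma GG_telescope (n : ℕ) (t : ℝ) :
    (ee 1 t - 1) * GG n t = ee ((n : ℤ) + 1) t - 1 := by
  have : (ee 1 t - 1) * GG n t
      = ∑ k ∈ Finset.range (n + 1), (ee (((k + 1 : ℕ) : ℤ)) t - ee ((k : ℕ) : ℤ) t) := by
    rw [GG, Finset.mul_sum]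
    refine Finset.sum_congr rfl fun k _ => ?_
    rw [sub_mul, one_mul, ee_mul]
    congr 2
    push_cast
    ring
  rw [this, Finset.sum_range_sub (fun k : ℕ => ee ((k : ℕ) : ℤ) t)]
  push_cast
  rw [ee_zero]

lemma exp_sq_sub_one (z : ℂ) :
    Complex.exp (z * Complex.I) * Complex.exp (z * Complex.I) - 1
      = Complex.exp (z * Complex.I) * (2 * Complex.I * Complex.sin z) := by
  rw [Complex.sin]
  have e2 : Complex.exp (z * Complex.I) * Complex.exp (-z * Complex.I) = 1 := by
    rw [← Complex.exp_add, show z * Complex.I + -z * Complex.I = 0 by ring, Complex.exp_zero]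
  linear_combination (Complex.exp (z * Complex.I) ^ 2
    - Complex.exp (z * Complex.I) * Complex.exp (-z * Complex.I)) * Complex.I_sq + e2

lemma abs_ee_one_sub_one (t : ℝ) : ‖ee 1 t - 1‖ = 2 * |Real.sin (t / 2)| := by
  have key : ee 1 t - 1
      = Complex.exp (((t / 2 : ℝ) : ℂ) * Complex.I) * (2 * Complex.I * Complex.sin ((t / 2 : ℝ) : ℂ)) := by
    rw [← exp_sq_sub_one]
    congr 1
    rw [ee, ← Complex.exp_add]
    congr 1
    push_cast
    ring
  rw [key, norm_mul, Complex.norm_exp_ofReal_mul_I, one_mul, ← Complex.ofReal_sin, norm_mul,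
    norm_mul, Complex.norm_I, Complex.norm_real, Real.norm_eq_abs, Complex.norm_two]
  ring

lemma sin_half_lower {t : ℝ} (hpi : |t| ≤ π) : |t| / π ≤ |Real.sin (t / 2)| := by
  have hmls := Real.mul_le_sin (x := |t| / 2) (by positivity) (by linarith)
  have habs : Real.sin (|t| / 2) = |Real.sin (t / 2)| := by
    rcases abs_cases t with ⟨h, ht⟩ | ⟨h, ht⟩
    · rw [h]
      exact (_root_.abs_of_nonneg (Real.sin_nonneg_of_nonneg_of_le_pi (by linarith)
        (by nlinarith [Real.pi_pos, abs_nonneg t]))).symm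
    · rw [h, show -t / 2 = -(t / 2) by ring, Real.sin_neg]
      have hge : Real.sin (-(t / 2)) ≥ 0 :=
        Real.sin_nonneg_of_nonneg_of_le_pi (by linarith)
          (by nlinarith [Real.pi_pos, abs_nonneg t])
      rw [Real.sin_neg] at hge
      rw [abs_of_nonpos (by linarith)]
  rw [← habs]
  calc |t| / π = 2 / π * (|t| / 2) := by ring
    _ ≤ Real.sin (|t| / 2) := hmls

lemma abs_GG_le' {t : ℝ} (h0 : t ≠ 0) (hpi : |t| ≤ π) (n : ℕ) :
    ‖GG n t‖ ≤ π / |t| := by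
  have hs := sin_half_lower hpi
  have htpos : 0 < |t| := abs_pos.2 h0
  have hspos : 0 < |Real.sin (t / 2)| :=
    lt_of_lt_of_le (by positivity) hs
  have key : ‖ee 1 t - 1‖ * ‖GG n t‖ ≤ 2 := by
    rw [← norm_mul, GG_telescope]
    calc ‖ee ((n : ℤ) + 1) t - 1‖
        ≤ ‖ee ((n : ℤ) + 1) t‖ + ‖(1 : ℂ)‖ := by
          exact (norm_sub_le _ _)
      _ = 2 := by rw [abs_ee]; norm_num
  rw [abs_ee_one_sub_one] at key
  have h1 : ‖GG n t‖ ≤ 1 / |Real.sin (t / 2)| := by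
    rw [le_div_iff₀ hspos]
    nlinarith [norm_nonneg (GG n t)]
  refine h1.trans ?_
  rw [div_le_div_iff₀ hspos htpos]
  have hπ := Real.pi_pos
  rw [div_le_iff₀ hπ] at hs
  nlinarith

lemma KK_le_quad {t : ℝ} (h0 : t ≠ 0) (hpi : |t| ≤ π) (n : ℕ) :
    KK n t ≤ π ^ 2 / (((n : ℝ) + 1) * t ^ 2) := by
  have h := abs_GG_le' h0 hpi n
  have ht2 : (0 : ℝ) < t ^ 2 := by positivity
  have hn : (0 : ℝ) < (n : ℝ) + 1 := by positivity
  have hns : Complex.normSq (GG n t) ≤ π ^ 2 / t ^ 2 := by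
    rw [Complex.normSq_eq_norm_sq]
    calc ‖GG n t‖ ^ 2 ≤ (π / |t|) ^ 2 :=
          pow_le_pow_left₀ (norm_nonneg _) h 2
      _ = π ^ 2 / t ^ 2 := by rw [div_pow, _root_.sq_abs]
  rw [KK]
  calc ((n : ℝ) + 1)⁻¹ * Complex.normSq (GG n t) ≤ ((n : ℝ) + 1)⁻¹ * (π ^ 2 / t ^ 2) := by
        exact mul_le_mul_of_nonneg_left hns (by positivity)
    _ = π ^ 2 / (((n : ℝ) + 1) * t ^ 2) := by field_simp
  
lemma GG_neg (n : ℕ) (t : ℝ) : GG n (-t) = (starRingEnd ℂ) (GG n t) := by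
  rw [GG, GG, map_sum]
  exact Finset.sum_congr rfl fun k _ => by rw [ee_neg_arg, conj_ee]

lemma KK_even (n : ℕ) (t : ℝ) : KK n (-t) = KK n t := by
  rw [KK, KK, GG_neg, Complex.normSq_conj]

lemma continuous_GG (n : ℕ) : Continuous (GG n) :=
  continuous_finset_sum _ fun k _ => continuous_ee k

lemma continuous_KK (n : ℕ) : Continuous (KK n) :=
  continuous_const.mul (Complex.continuous_normSq.comp (continuous_GG n))

lemma continuous_DK (k : ℕ) : Continuous (DK k) :=
  continuous_finset_sum _ fun j _ => continuous_ee j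

lemma integral_ee_zero : ∫ t in (-π)..π, ee 0 t = 2 * (π : ℂ) := by
  simp [ee_zero]
  push_cast
  ring

lemma integral_ee_ne {j : ℤ} (hj : j ≠ 0) : ∫ t in (-π)..π, ee j t = 0 := by
  have hrw : (∫ t in (-π)..π, ee j t)
      = ∫ t in (-π)..π, Complex.exp ((Complex.I * (j : ℂ)) * (t : ℂ)) := by
    refine intervalIntegral.integral_congr fun t _ => ?_
    rw [ee, mul_assoc]
  have hc : Complex.I * (j : ℂ) ≠ 0 :=
    mul_ne_zero Complex.I_ne_zero (Int.cast_ne_zero.2 hj)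
  rw [hrw, integral_exp_mul_complex hc]
  have harg : Complex.I * (j : ℂ) * ((π : ℝ) : ℂ)
      = Complex.I * (j : ℂ) * (((-π : ℝ)) : ℂ) + (j : ℂ) * (2 * (π : ℂ) * Complex.I) := by
    push_cast
    ring
  rw [harg, Complex.exp_add, Complex.exp_int_mul_two_pi_mul_I, mul_one, sub_self, zero_div]

lemma integral_DK (k : ℕ) : ∫ t in (-π)..π, DK k t = 2 * (π : ℂ) := by
  simp only [DK]
  rw [intervalIntegral.integral_finset_sum
    (fun j _ => ((continuous_ee j).intervalIntegrable _ _))]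
  rw [Finset.sum_eq_single 0]
  · exact integral_ee_zero
  · exact fun j _ hj => integral_ee_ne hj
  · intro h
    exfalso
    apply h
    simp

section Repr

open Complex Finset intervalIntegral

variable {f : ℝ → ℝ}

lemma DK_periodic (k : ℕ) : Function.Periodic (DK k) (2 * π) := fun u =>
  Finset.sum_congr rfl fun j _ => ee_periodic j u

lemma partialSum_eq (hf : Continuous f) (k : ℕ) (x : ℝ) :
    fourierPartialSum k f x
      = (1 / (2 * (π : ℂ))) * ∫ t in (-π)..π, (f t : ℂ) * DK k (x - t) := by
  rw [fourierPartialSum]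
  have step : ∀ j ∈ Finset.Icc (-(k : ℤ)) (k : ℤ),
      fourierCoef f j * Complex.exp (Complex.I * (j : ℂ) * (x : ℂ))
        = (1 / (2 * (π : ℂ))) * ∫ t in (-π)..π, (f t : ℂ) * ee j (x - t) := by
    intro j _
    rw [fourierCoef, mul_assoc]
    congr 1
    rw [← intervalIntegral.integral_mul_const]
    refine intervalIntegral.integral_congr fun t _ => ?_
    rw [mul_assoc]
    congr 1
    rw [ee, ← Complex.exp_add]
    congr 1
    push_cast
    ring
  have hint : ∀ j ∈ Finset.Icc (-(k : ℤ)) (k : ℤ),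
      IntervalIntegrable (fun t : ℝ => (f t : ℂ) * ee j (x - t)) MeasureTheory.volume (-π) π :=
    fun j _ => Continuous.intervalIntegrable
      ((Complex.continuous_ofReal.comp hf).mul
        ((continuous_ee j).comp (continuous_const.sub continuous_id))) _ _
  rw [Finset.sum_congr rfl step, ← Finset.mul_sum, ← intervalIntegral.integral_finset_sum hint]
  congr 1
  refine intervalIntegral.integral_congr fun t _ => ?_
  rw [DK, Finset.mul_sum]

lemma partialSum_eq' (hf : Continuous f) (hper : Function.Periodic f (2 * π)) (k : ℕ) (x : ℝ) :
    fourierPartialSum k f x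
      = (1 / (2 * (π : ℂ))) * ∫ t in (-π)..π, (f (x - t) : ℂ) * DK k t := by
  rw [partialSum_eq hf k x]
  congr 1
  have hF : Function.Periodic (fun u => (f u : ℂ) * DK k (x - u)) (2 * π) := by
    intro u
    simp only
    rw [hper u, show x - (u + 2 * π) = x - u - 2 * π by ring, (DK_periodic k).sub_eq]
  have h1 : (∫ t in (-π)..π, (f (x - t) : ℂ) * DK k t)
      = ∫ t in (-π)..π, (fun u => (f u : ℂ) * DK k (x - u)) (x - t) := by
    refine intervalIntegral.integral_congr fun t _ => ?_
    simp only
    rw [show x - (x - t) = t by ring]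
  rw [h1, intervalIntegral.integral_comp_sub_left (fun u => (f u : ℂ) * DK k (x - u)) x]
  have h2 := hF.intervalIntegral_add_eq (x - π) (-π)
  rw [show x - π + 2 * π = x + π by ring, show -π + 2 * π = π by ring] at h2
  rw [show x - -π = x + π by ring]
  exact h2.symm

lemma integral_KK_c (n : ℕ) : (∫ t in (-π)..π, ((KK n t : ℝ) : ℂ)) = 2 * (π : ℂ) := by
  have h : Set.EqOn (fun t => ((KK n t : ℝ) : ℂ))
      (fun t => (1 / ((n : ℂ) + 1)) * ∑ k ∈ Finset.range (n + 1), DK k t) (Set.uIcc (-π) π) := by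
    intro t _
    simp only
    rw [sum_DK_eq, KK]
    push_cast
    ring
  rw [intervalIntegral.integral_congr h, intervalIntegral.integral_const_mul,
    intervalIntegral.integral_finset_sum
      (fun k _ => (continuous_DK k).intervalIntegrable _ _),
    Finset.sum_congr rfl (fun k _ => integral_DK k), Finset.sum_const, Finset.card_range]
  have hn : ((n : ℂ) + 1) ≠ 0 := Nat.cast_add_one_ne_zero n
  field_simp
  rw [nsmul_eq_mul]; push_cast; ring

lemma fejerMean_eq (hf : Continuous f) (hper : Function.Periodic f (2 * π)) (n : ℕ) (x : ℝ) :
    fejerMean n f x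
      = (1 / (2 * (π : ℂ))) * ∫ t in (-π)..π, (f (x - t) : ℂ) * ((KK n t : ℝ) : ℂ) := by
  rw [fejerMean,
    Finset.sum_congr rfl (fun k (_ : k ∈ Finset.range (n + 1)) => partialSum_eq' hf hper k x),
    ← Finset.mul_sum,
    ← intervalIntegral.integral_finset_sum (fun (k : ℕ) (_ : k ∈ Finset.range (n + 1)) =>
      Continuous.intervalIntegrable (u := fun t : ℝ => (f (x - t) : ℂ) * DK k t)
      (((Complex.continuous_ofReal.comp (hf.comp (continuous_const.sub continuous_id))).mul
        (continuous_DK k))) _ _)]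
  rw [show (1 / ((n : ℂ) + 1)) * ((1 / (2 * (π : ℂ)))
        * ∫ t in (-π)..π, ∑ k ∈ Finset.range (n + 1), (f (x - t) : ℂ) * DK k t)
      = (1 / (2 * (π : ℂ))) * ((1 / ((n : ℂ) + 1))
        * ∫ t in (-π)..π, ∑ k ∈ Finset.range (n + 1), (f (x - t) : ℂ) * DK k t) by ring,
    ← intervalIntegral.integral_const_mul]
  congr 1
  refine intervalIntegral.integral_congr fun t _ => ?_
  rw [← Finset.mul_sum, sum_DK_eq, KK]
  push_cast
  ring

lemma diff_eq (hf : Continuous f) (hper : Function.Periodic f (2 * π)) (n : ℕ) (x : ℝ) :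
    (f x : ℂ) - fejerMean n f x
      = (((1 / (2 * π)) * ∫ t in (-π)..π, (f x - f (x - t)) * KK n t : ℝ) : ℂ) := by
  have hπ : ((π : ℝ) : ℂ) ≠ 0 := Complex.ofReal_ne_zero.2 Real.pi_ne_zero
  have hfx : (f x : ℂ)
      = (1 / (2 * (π : ℂ))) * ∫ t in (-π)..π, (f x : ℂ) * ((KK n t : ℝ) : ℂ) := by
    rw [intervalIntegral.integral_const_mul, integral_KK_c]
    field_simp
  have i1 : IntervalIntegrable (fun t : ℝ => (f x : ℂ) * ((KK n t : ℝ) : ℂ))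
      MeasureTheory.volume (-π) π :=
    Continuous.intervalIntegrable
      (continuous_const.mul (Complex.continuous_ofReal.comp (continuous_KK n))) _ _
  have i2 : IntervalIntegrable (fun t : ℝ => (f (x - t) : ℂ) * ((KK n t : ℝ) : ℂ))
      MeasureTheory.volume (-π) π :=
    Continuous.intervalIntegrable
      ((Complex.continuous_ofReal.comp (hf.comp (continuous_const.sub continuous_id))).mul
        (Complex.continuous_ofReal.comp (continuous_KK n))) _ _
  rw [fejerMean_eq hf hper n x, hfx, ← mul_sub, ← intervalIntegral.integral_sub i1 i2]
  have : (∫ t in (-π)..π, ((f x : ℂ) * ((KK n t : ℝ) : ℂ)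
      - (f (x - t) : ℂ) * ((KK n t : ℝ) : ℂ)))
      = ∫ t in (-π)..π, (((f x - f (x - t)) * KK n t : ℝ) : ℂ) := by
    refine intervalIntegral.integral_congr fun t _ => ?_
    push_cast
    ring
  rw [this, intervalIntegral.integral_ofReal]
  push_cast
  ring

end Repr

section Estimate

open Complex Finset intervalIntegral Filter Topology

lemma holder_continuous {f : ℝ → ℝ} {M α : ℝ} (hα0 : 0 < α)
    (hb : ∀ x y : ℝ, |f x - f y| ≤ M * |x - y| ^ α) : Continuous f := by
  rw [continuous_iff_continuousAt]
  intro x₀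
  rw [ContinuousAt, tendsto_iff_dist_tendsto_zero]
  have h0 : Tendsto (fun x : ℝ => |x - x₀|) (𝓝 x₀) (𝓝 0) := by
    have h : Tendsto (fun x : ℝ => x - x₀) (𝓝 x₀) (𝓝 0) := by
      have := (continuous_id.sub (continuous_const (y := x₀))).tendsto x₀
      simpa only [Pi.sub_def, id_eq, sub_self] using this
    simpa using h.abs
  have h1 : Tendsto (fun x : ℝ => M * |x - x₀| ^ α) (𝓝 x₀) (𝓝 0) := by
    have hrpow : Tendsto (fun y : ℝ => y ^ α) (𝓝 0) (𝓝 0) := by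
      have := (Real.continuousAt_rpow_const 0 α (Or.inr hα0.le)).tendsto
      rwa [Real.zero_rpow hα0.ne'] at this
    have := (hrpow.comp h0).const_mul M
    simpa using this
  refine squeeze_zero (fun x => dist_nonneg) (fun x => ?_) h1
  rw [Real.dist_eq]
  exact hb x x₀

end Estimate

end BernsteinAux

/-- **Bernstein.** If `f` is `2π`-periodic and Hölder of order `α ∈ (0,1)` with constant `M`,
then the Fejér means approximate `f` uniformly with the rate `C·M·n^{−α}`, where `C`
depends only on `α`. -/
theorem bernstein_fejer_holder (α : ℝ) (hα0 : 0 < α) (hα1 : α < 1) :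
    ∃ C : ℝ, ∀ (f : ℝ → ℝ) (M : ℝ), 0 ≤ M →
      Function.Periodic f (2 * Real.pi) →
      (∀ x y : ℝ, |f x - f y| ≤ M * |x - y| ^ α) →
      ∀ n : ℕ, 1 ≤ n → ∀ x : ℝ,
        ‖(f x : ℂ) - fejerMean n f x‖ ≤ C * M * (n : ℝ) ^ (-α) := by
  classical
  open BernsteinAux in
  refine ⟨(1 / (2 * π)) * (2 + 2 * π ^ 2 / (1 - α)), ?_⟩
  intro f M hM hper hb n hn x
  have hf : Continuous f := BernsteinAux.holder_continuous hα0 hb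
  have hπ := Real.pi_pos
  have h1α : (0 : ℝ) < 1 - α := by linarith
  set N : ℝ := (n : ℝ) + 1 with hN
  have hN1 : (1 : ℝ) ≤ (n : ℝ) := by exact_mod_cast hn
  have hNpos : (0 : ℝ) < N := by rw [hN]; linarith
  have hN2 : (2 : ℝ) ≤ N := by rw [hN]; linarith
  set δ : ℝ := N⁻¹ with hδ
  have hδpos : 0 < δ := by rw [hδ]; positivity
  have hδN : δ * N = 1 := inv_mul_cancel₀ hNpos.ne'
  have hδ1 : δ ≤ 1 := by nlinarith
  have hδπ : δ ≤ π := by linarith [Real.pi_gt_three]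
  have hd := BernsteinAux.diff_eq hf hper n x
  rw [hd, Complex.norm_real, Real.norm_eq_abs]
  set g : ℝ → ℝ := fun t => (f x - f (x - t)) * KK n t with hg
  set B : ℝ → ℝ := fun t => M * |t| ^ α * KK n t with hB
  have hgcont : Continuous g :=
    (continuous_const.sub (hf.comp (continuous_const.sub continuous_id))).mul (continuous_KK n)
  have hBcont : Continuous B :=
    (continuous_const.mul (continuous_abs.rpow_const fun _ => Or.inr hα0.le)).mul
      (continuous_KK n)
  have habs_le : ∀ t : ℝ, |g t| ≤ B t := by
    intro t
    show |(f x - f (x - t)) * KK n t| ≤ M * |t| ^ α * KK n t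
    rw [abs_mul, abs_of_nonneg (KK_nonneg n t)]
    refine mul_le_mul_of_nonneg_right ?_ (KK_nonneg n t)
    have h := hb x (x - t)
    rwa [show x - (x - t) = t by ring] at h
  have step1 : |∫ t in (-π)..π, g t| ≤ ∫ t in (-π)..π, B t := by
    refine (intervalIntegral.abs_integral_le_integral_abs (by linarith)).trans ?_
    exact intervalIntegral.integral_mono_on (by linarith)
      (hgcont.abs.intervalIntegrable _ _) (hBcont.intervalIntegrable _ _)
      fun t _ => habs_le t
  have hsplit : (∫ t in (-π)..(-δ), B t) + (∫ t in (-δ)..δ, B t) + (∫ t in δ..π, B t)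
      = ∫ t in (-π)..π, B t := by
    rw [intervalIntegral.integral_add_adjacent_intervals (hBcont.intervalIntegrable _ _)
      (hBcont.intervalIntegrable _ _),
      intervalIntegral.integral_add_adjacent_intervals (hBcont.intervalIntegrable _ _)
      (hBcont.intervalIntegrable _ _)]
  -- middle piece
  have hmid : (∫ t in (-δ)..δ, B t) ≤ 2 * M * N ^ (-α) := by
    have hpt : ∀ t ∈ Set.Icc (-δ) δ, B t ≤ M * δ ^ α * N := by
      intro t ht
      have h1 : |t| ≤ δ := abs_le.2 ⟨ht.1, ht.2⟩
      have h2 : |t| ^ α ≤ δ ^ α := Real.rpow_le_rpow (abs_nonneg t) h1 hα0.le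
      have h3 : KK n t ≤ N := by rw [hN]; exact KK_le_const n t
      show M * |t| ^ α * KK n t ≤ M * δ ^ α * N
      have h4 : (0 : ℝ) ≤ M * |t| ^ α := by positivity
      refine mul_le_mul (mul_le_mul_of_nonneg_left h2 hM) h3 (KK_nonneg n t) ?_
      positivity
    have hδα : δ ^ α = N ^ (-α) := by
      rw [hδ, Real.inv_rpow hNpos.le, ← Real.rpow_neg hNpos.le]
    calc (∫ t in (-δ)..δ, B t) ≤ ∫ _t in (-δ)..δ, M * δ ^ α * N :=
          intervalIntegral.integral_mono_on (by linarith)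
            (hBcont.intervalIntegrable _ _) (intervalIntegrable_const) hpt
      _ = (δ - -δ) • (M * δ ^ α * N) := intervalIntegral.integral_const _
      _ = 2 * M * N ^ (-α) := by
          rw [smul_eq_mul, hδα]
          linear_combination (2 * M * N ^ (-α)) * hδN
  -- right piece
  have hright : (∫ t in δ..π, B t) ≤ M * π ^ 2 / (1 - α) * N ^ (-α) := by
    have hpt : ∀ t ∈ Set.Icc δ π, B t ≤ (M * π ^ 2 / N) * t ^ (α - 2) := by
      intro t ht
      have htpos : 0 < t := lt_of_lt_of_le hδpos ht.1
      have habst : |t| = t := abs_of_pos htpos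
      have hquad := KK_le_quad (t := t) htpos.ne' (by rw [habst]; exact ht.2) n
      have h1 : B t ≤ M * t ^ α * (π ^ 2 / (N * t ^ 2)) := by
        show M * |t| ^ α * KK n t ≤ _
        rw [habst]
        rw [hN]
        exact mul_le_mul_of_nonneg_left hquad (by positivity)
      refine h1.trans_eq ?_
      rw [Real.rpow_sub htpos, show ((2 : ℝ)) = ((2 : ℕ) : ℝ) by norm_num,
        Real.rpow_natCast]
      field_simp
    have hcont2 : ContinuousOn (fun t : ℝ => (M * π ^ 2 / N) * t ^ (α - 2))
        (Set.uIcc δ π) := by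
      refine continuousOn_const.mul (ContinuousOn.rpow_const continuousOn_id fun t ht => ?_)
      rw [Set.uIcc_of_le hδπ] at ht
      exact Or.inl (ne_of_gt (lt_of_lt_of_le hδpos ht.1))
    have hint_rpow : (∫ t in δ..π, t ^ (α - 2))
        = (π ^ (α - 1) - δ ^ (α - 1)) / (α - 1) := by
      rw [integral_rpow (Or.inr ⟨by intro hc; linarith,
        by rw [Set.uIcc_of_le hδπ]; intro h0; exact absurd h0.1 (not_le.2 hδpos)⟩)]
      rw [show α - 2 + 1 = α - 1 by ring]
    have hδα : δ ^ (α - 1) = N ^ (1 - α) := by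
      rw [hδ, Real.inv_rpow hNpos.le, ← Real.rpow_neg hNpos.le, show -(α - 1) = 1 - α by ring]
    have h2 : N ^ (1 - α) * N⁻¹ = N ^ (-α) := by
      rw [← Real.rpow_neg_one N, ← Real.rpow_add hNpos, show 1 - α + -1 = -α by ring]
    calc (∫ t in δ..π, B t) ≤ ∫ t in δ..π, (M * π ^ 2 / N) * t ^ (α - 2) :=
          intervalIntegral.integral_mono_on hδπ (hBcont.intervalIntegrable _ _)
            (hcont2.intervalIntegrable) hpt
      _ = (M * π ^ 2 / N) * ∫ t in δ..π, t ^ (α - 2) :=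
          intervalIntegral.integral_const_mul _ _
      _ ≤ (M * π ^ 2 / N) * (δ ^ (α - 1) / (1 - α)) := by
          rw [hint_rpow]
          refine mul_le_mul_of_nonneg_left ?_ (by positivity)
          have hπα : 0 < π ^ (α - 1) := Real.rpow_pos_of_pos hπ _
          have hδα2 : 0 < δ ^ (α - 1) := Real.rpow_pos_of_pos hδpos _
          have key : (π ^ (α - 1) - δ ^ (α - 1)) / (α - 1)
              = (δ ^ (α - 1) - π ^ (α - 1)) / (1 - α) := by
            rw [div_eq_div_iff ((show α - 1 < 0 by linarith).ne) h1α.ne']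
            ring
          rw [key, div_le_div_iff₀ h1α h1α]
          nlinarith
      _ = M * π ^ 2 / (1 - α) * N ^ (-α) := by
          rw [hδα, show M * π ^ 2 / N * (N ^ (1 - α) / (1 - α))
              = M * π ^ 2 / (1 - α) * (N ^ (1 - α) * N⁻¹) by ring, h2]
  -- left piece equals right piece
  have hBev : ∀ t : ℝ, B (-t) = B t := by
    intro t
    show M * |(-t)| ^ α * KK n (-t) = M * |t| ^ α * KK n t
    rw [abs_neg, KK_even]
  have hleft : (∫ t in (-π)..(-δ), B t) = ∫ t in δ..π, B t := by
    have h := intervalIntegral.integral_comp_neg (a := δ) (b := π) B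
    rw [← h]
    exact intervalIntegral.integral_congr (a := δ) (b := π) fun t _ => hBev t
  have hS : (∫ t in (-π)..π, B t)
      ≤ 2 * M * N ^ (-α) + 2 * (M * π ^ 2 / (1 - α) * N ^ (-α)) := by
    rw [← hsplit, hleft]
    linarith
  have habs2 : |(1 / (2 * π)) * ∫ t in (-π)..π, g t|
      = (1 / (2 * π)) * |∫ t in (-π)..π, g t| := by
    rw [abs_mul, abs_of_pos (by positivity : (0:ℝ) < 1 / (2 * π))]
  rw [habs2]
  have hfinal1 : (1 / (2 * π)) * |∫ t in (-π)..π, g t|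
      ≤ (1 / (2 * π)) * (2 * M * N ^ (-α) + 2 * (M * π ^ 2 / (1 - α) * N ^ (-α))) :=
    mul_le_mul_of_nonneg_left (step1.trans hS) (by positivity)
  refine hfinal1.trans ?_
  have hNα : N ^ (-α) ≤ (n : ℝ) ^ (-α) := by
    have h1 : (n : ℝ) ^ α ≤ N ^ α :=
      Real.rpow_le_rpow (by linarith) (by rw [hN]; linarith) hα0.le
    have h2 : 0 < (n : ℝ) ^ α := Real.rpow_pos_of_pos (by linarith) α
    rw [Real.rpow_neg hNpos.le, Real.rpow_neg (by linarith : (0:ℝ) ≤ (n:ℝ))]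
    exact inv_anti₀ h2 h1
  rw [show (1 / (2 * π)) * (2 * M * N ^ (-α) + 2 * (M * π ^ 2 / (1 - α) * N ^ (-α)))
      = ((1 / (2 * π)) * (2 + 2 * π ^ 2 / (1 - α))) * M * N ^ (-α) by ring]
  refine mul_le_mul_of_nonneg_left hNα ?_
  have hC0 : (0 : ℝ) ≤ (1 / (2 * π)) * (2 + 2 * π ^ 2 / (1 - α)) := by
    have h3 : (0 : ℝ) ≤ 2 * π ^ 2 / (1 - α) := div_nonneg (by positivity) (by linarith)
    have h4 : (0 : ℝ) ≤ 1 / (2 * π) := by positivity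
    nlinarith
  exact mul_nonneg hC0 hM
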